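/- Let G be a finite group of odd order whose order is divisible by 15 and which is a quotient of the von Dyck group D(3,3,5). Then the commutator subgroup G' is nilpotent if and only if |G| = 3·5^n for some natural number n. -/

import Mathlib

/-- The von Dyck group `D(a,b,c) = ⟨x, y ∣ x^a = y^b = (xy)^c = 1⟩`. -/
def dyckRels (a b c : ℕ) : Set (FreeGroup (Fin 2)) :=
  {FreeGroup.of 0 ^ a, FreeGroup.of 1 ^ b, (FreeGroup.of 0 * FreeGroup.of 1) ^ c}

abbrev DyckGroup (a b c : ℕ) : Type := PresentedGroup (dyckRels a b c)

open scoped commutatorElement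

section Aux
variable {G : Type*} [Group G]

/-- If the quotient by `N` is generated by one element, the commutator subgroup lies in `N`. -/
lemma commutator_le_of_quotient_cyclic {N : Subgroup G} [N.Normal] {q : G ⧸ N}
    (htop : ∀ x : G ⧸ N, x ∈ Subgroup.zpowers q) :
    commutator G ≤ N := by
  have hcomm : ∀ x y : G ⧸ N, Commute x y := by
    intro x y
    obtain ⟨m, rfl⟩ := htop x
    obtain ⟨k, rfl⟩ := htop y
    exact (Commute.refl q).zpow_zpow m k
  rw [commutator_def, Subgroup.commutator_le]
  intro g1 _ g2 _
  rw [← QuotientGroup.eq_one_iff]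
  have : (↑(⁅g1, g2⁆) : G ⧸ N) = ⁅(g1 : G ⧸ N), (g2 : G ⧸ N)⁆ := by
    simp [commutatorElement_def]
  rw [this, commutatorElement_eq_one_iff_commute]
  exact hcomm _ _

/-- If `G` is generated by `a, b` and `a*b ∈ N` (normal), then `G/N` is generated by `mk a`. -/
lemma quotient_gen_of_pair {a b : G} (hclosure : Subgroup.closure {a, b} = ⊤)
    {N : Subgroup G} [N.Normal] (hab : a * b ∈ N) :
    ∀ x : G ⧸ N, x ∈ Subgroup.zpowers (↑a : G ⧸ N) := by
  intro x
  have h1 : ((a : G) : G ⧸ N) * ((b : G) : G ⧸ N) = 1 := by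
    rw [← QuotientGroup.mk_mul, QuotientGroup.eq_one_iff]; exact hab
  have hb : ((b : G) : G ⧸ N) = (↑a : G ⧸ N)⁻¹ := eq_inv_of_mul_eq_one_right h1
  obtain ⟨g, rfl⟩ := QuotientGroup.mk_surjective x
  have hg : g ∈ Subgroup.closure ({a, b} : Set G) := hclosure ▸ Subgroup.mem_top g
  have hmem : (↑g : G ⧸ N) ∈ Subgroup.map (QuotientGroup.mk' N) (Subgroup.closure {a, b}) :=
    ⟨g, hg, rfl⟩
  rw [MonoidHom.map_closure, Set.image_pair] at hmem
  have hle : Subgroup.closure ({(QuotientGroup.mk' N) a, (QuotientGroup.mk' N) b} : Set (G ⧸ N))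
      ≤ Subgroup.zpowers (↑a : G ⧸ N) := by
    rw [Subgroup.closure_le]
    rintro y (rfl | rfl)
    · exact Subgroup.mem_zpowers _
    · show ((b : G) : G ⧸ N) ∈ _
      rw [hb]
      exact inv_mem (Subgroup.mem_zpowers _)
  exact hle hmem

end Aux

/-- Proposition 7.2 (core): for a finite group `G` of odd order divisible by `15` that is
a quotient of the von Dyck group `D(3,3,5)`, the commutator subgroup `G'` is nilpotent if
and only if `|G| = 3·5^n`. -/
theorem commutator_nilpotent_iff_dyck_335 (G : Type*) [Group G] [Finite G]
    (hodd : Odd (Nat.card G)) (hdvd : 15 ∣ Nat.card G)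
    (f : DyckGroup 3 3 5 →* G) (hf : Function.Surjective f) :
    Group.IsNilpotent (commutator G) ↔ ∃ n : ℕ, Nat.card G = 3 * 5 ^ n := by
  haveI hfact5 : Fact (Nat.Prime 5) := ⟨by norm_num⟩
  haveI hfact3 : Fact (Nat.Prime 3) := ⟨by norm_num⟩
  have hrel : ∀ r ∈ dyckRels 3 3 5, (PresentedGroup.mk (dyckRels 3 3 5) r) = 1 := fun r hr =>
    (QuotientGroup.eq_one_iff r).mpr (Subgroup.subset_normalClosure hr)
  set a := f (PresentedGroup.of (0 : Fin 2)) with ha_def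
  set b := f (PresentedGroup.of (1 : Fin 2)) with hb_def
  have ha : a ^ 3 = 1 := by
    rw [ha_def, ← map_pow, show (PresentedGroup.of (0 : Fin 2) : DyckGroup 3 3 5) ^ 3
      = PresentedGroup.mk _ (FreeGroup.of 0 ^ 3) by rw [map_pow]; rfl,
      hrel _ (by simp [dyckRels]), map_one]
  have hb : b ^ 3 = 1 := by
    rw [hb_def, ← map_pow, show (PresentedGroup.of (1 : Fin 2) : DyckGroup 3 3 5) ^ 3
      = PresentedGroup.mk _ (FreeGroup.of 1 ^ 3) by rw [map_pow]; rfl,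
      hrel _ (by simp [dyckRels]), map_one]
  have hab : (a * b) ^ 5 = 1 := by
    rw [ha_def, hb_def, ← map_mul, ← map_pow,
      show (PresentedGroup.of (0 : Fin 2) * PresentedGroup.of (1 : Fin 2) : DyckGroup 3 3 5) ^ 5
      = PresentedGroup.mk _ ((FreeGroup.of 0 * FreeGroup.of 1) ^ 5) by rw [map_pow, map_mul]; rfl,
      hrel _ (by simp [dyckRels]), map_one]
  have hclosure : Subgroup.closure ({a, b} : Set G) = ⊤ := by
    have h1 : Subgroup.closure (Set.range (PresentedGroup.of : Fin 2 → DyckGroup 3 3 5)) = ⊤ :=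
      PresentedGroup.closure_range_of _
    have h2 : Subgroup.map f (Subgroup.closure (Set.range
        (PresentedGroup.of : Fin 2 → DyckGroup 3 3 5))) = ⊤ := by
      rw [h1, ← MonoidHom.range_eq_map, MonoidHom.range_eq_top]
      exact hf
    rw [MonoidHom.map_closure] at h2
    have himg : f '' Set.range (PresentedGroup.of : Fin 2 → DyckGroup 3 3 5) = {a, b} := by
      rw [← Set.range_comp]
      ext x
      simp only [Set.mem_range, Function.comp_apply, Fin.exists_fin_two, Set.mem_insert_iff,
        Set.mem_singleton_iff]
      constructor
      · rintro (rfl | rfl) <;> simp [ha_def, hb_def]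
      · rintro (rfl | rfl) <;> simp [ha_def, hb_def]
    rwa [himg] at h2
  -- `a*b` lies in the commutator subgroup.
  have hzmem : a * b ∈ commutator G := by
    set N := commutator G with hN_def
    have hconj : ⁅a, b⁆ ∈ N := by
      rw [hN_def, commutator_def]
      exact Subgroup.commutator_mem_commutator (Subgroup.mem_top a) (Subgroup.mem_top b)
    have hc : Commute ((a : G) : G ⧸ N) ((b : G) : G ⧸ N) := by
      rw [← commutatorElement_eq_one_iff_commute]
      have : (↑(⁅a, b⁆) : G ⧸ N) = ⁅((a : G) : G ⧸ N), ((b : G) : G ⧸ N)⁆ := by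
        simp [commutatorElement_def]
      rw [← this, QuotientGroup.eq_one_iff]
      exact hconj
    have ht3 : ((↑(a * b) : G ⧸ N)) ^ 3 = 1 := by
      rw [QuotientGroup.mk_mul, hc.mul_pow, show ((a : G) : G ⧸ N) ^ 3 = ((a ^ 3 : G) : G ⧸ N)
        by rfl, show ((b : G) : G ⧸ N) ^ 3 = ((b ^ 3 : G) : G ⧸ N) by rfl, ha, hb]
      simp
    have ht5 : ((↑(a * b) : G ⧸ N)) ^ 5 = 1 := by
      rw [show ((↑(a * b) : G ⧸ N)) ^ 5 = (((a * b) ^ 5 : G) : G ⧸ N) by rfl, hab]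
      rfl
    have hord : orderOf ((↑(a * b) : G ⧸ N)) ∣ Nat.gcd 3 5 :=
      Nat.dvd_gcd (orderOf_dvd_of_pow_eq_one ht3) (orderOf_dvd_of_pow_eq_one ht5)
    rw [show Nat.gcd 3 5 = 1 by norm_num, Nat.dvd_one, orderOf_eq_one_iff] at hord
    rwa [← QuotientGroup.eq_one_iff]
  -- The quotient `G ⧸ commutator G` is generated by `a` and has order dividing 3.
  have hq := quotient_gen_of_pair hclosure hzmem
  have hdvd3 : Nat.card (G ⧸ commutator G) ∣ 3 := by
    have h1 : Subgroup.zpowers (↑a : G ⧸ commutator G) = ⊤ := by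
      rw [Subgroup.eq_top_iff']; exact hq
    have h2 : orderOf (↑a : G ⧸ commutator G) ∣ 3 := by
      apply orderOf_dvd_of_pow_eq_one
      rw [show (↑a : G ⧸ commutator G) ^ 3 = ((a ^ 3 : G) : G ⧸ commutator G) by rfl, ha]
      rfl
    calc Nat.card (G ⧸ commutator G) = Nat.card (⊤ : Subgroup (G ⧸ commutator G)) :=
          (Subgroup.card_top).symm
      _ = Nat.card (Subgroup.zpowers (↑a : G ⧸ commutator G)) := by rw [h1]
      _ = orderOf (↑a : G ⧸ commutator G) := Nat.card_zpowers _
      _ ∣ 3 := h2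
  have hcard := Subgroup.card_eq_card_quotient_mul_card_subgroup (commutator G)
  constructor
  · -- Forward direction
    intro hnil
    -- the commutator subgroup is the normal closure of `a*b`
    have hN : commutator G = Subgroup.normalClosure {a * b} := by
      refine le_antisymm ?_ (Subgroup.normalClosure_le_normal (by
        intro x hx
        rw [Set.mem_singleton_iff] at hx
        subst hx
        exact hzmem))
      exact commutator_le_of_quotient_cyclic
        (quotient_gen_of_pair hclosure (Subgroup.subset_normalClosure rfl))
    obtain ⟨P⟩ : Nonempty (Sylow 5 (commutator G)) := inferInstance
    have hPnormal : (P : Subgroup (commutator G)).Normal := by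
      have htfae := (isNilpotent_of_finite_tfae (G := commutator G)).out 0 3
      exact htfae.mp hnil 5 hfact5 P
    haveI : Unique (Sylow 5 (commutator G)) := Sylow.unique_of_normal P hPnormal
    set Pmap := Subgroup.map (commutator G).subtype (P : Subgroup (commutator G)) with hPmap
    have hmem5 : ∀ g : G, ∀ hg : g ∈ commutator G, g ^ 5 = 1 → g ∈ Pmap := by
      intro g hg hg5
      have hg5' : (⟨g, hg⟩ : commutator G) ^ 5 = 1 := by
        ext; exact hg5
      have hpg : IsPGroup 5 (Subgroup.zpowers (⟨g, hg⟩ : commutator G)) := by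
        intro x
        refine ⟨1, ?_⟩
        obtain ⟨x, m, hm⟩ := x
        have hx5 : x ^ (5 : ℕ) ^ 1 = 1 := by
          rw [← hm, pow_one, ← zpow_natCast, ← zpow_mul, mul_comm, zpow_mul, zpow_natCast, hg5',
            one_zpow]
        ext
        simpa using Subtype.ext_iff.mp hx5
      obtain ⟨Q, hQ⟩ := hpg.exists_le_sylow
      have hQP : Q = P := Subsingleton.elim Q P
      exact ⟨⟨g, hg⟩, hQP ▸ hQ (Subgroup.mem_zpowers _), rfl⟩
    have hle : commutator G ≤ Pmap := by
      rw [hN]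
      show Subgroup.closure _ ≤ Pmap
      rw [Subgroup.closure_le]
      intro c hc
      rw [Group.mem_conjugatesOfSet_iff] at hc
      obtain ⟨y, hy, hconj⟩ := hc
      rw [Set.mem_singleton_iff] at hy
      subst hy
      obtain ⟨u, hu⟩ := isConj_iff.mp hconj
      subst hu
      have hmem : u * (a * b) * u⁻¹ ∈ commutator G :=
        (Subgroup.Normal.conj_mem inferInstance _ hzmem u)
      refine hmem5 _ hmem ?_
      have : (u * (a * b) * u⁻¹) ^ 5 = u * (a * b) ^ 5 * u⁻¹ := by
        simpa [MulAut.conj_apply] using (map_pow (MulAut.conj u) (a * b) 5).symm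
      rw [this, hab, mul_one, mul_inv_cancel]
    have heq : commutator G = Pmap := le_antisymm hle (Subgroup.map_subtype_le _)
    have hp5 : IsPGroup 5 (commutator G) := by
      have h := P.isPGroup'.map (commutator G).subtype
      rw [← hPmap, ← heq] at h
      exact h
    obtain ⟨n, hn⟩ := hp5.exists_card_eq
    refine ⟨n, ?_⟩
    rw [hn] at hcard
    rcases (Nat.prime_three).eq_one_or_self_of_dvd _ hdvd3 with h | h
    · exfalso
      have h3 : (3 : ℕ) ∣ Nat.card G := dvd_trans (by norm_num) hdvd
      rw [hcard, h, one_mul] at h3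
      have := Nat.Prime.dvd_of_dvd_pow (Nat.prime_three) h3
      norm_num at this
    · rw [hcard, h]
  · -- Reverse direction
    rintro ⟨n, hn⟩
    obtain ⟨P⟩ : Nonempty (Sylow 5 G) := inferInstance
    have hcardP : Nat.card P = 5 ^ n := by
      rw [Sylow.card_eq_multiplicity, hn]
      congr 1
      rw [Nat.factorization_mul (by norm_num) (pow_ne_zero n (by norm_num))]
      simp [Nat.Prime.factorization_pow,
        Nat.factorization_eq_zero_of_not_dvd (by norm_num : ¬ (5 ∣ 3)),
        Nat.Prime.factorization_self (by norm_num : Nat.Prime 5)]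
    have hindex : (P : Subgroup G).index = 3 := by
      have hmi := Subgroup.card_mul_index (P : Subgroup G)
      rw [show Nat.card (P : Subgroup G) = Nat.card P from rfl, hcardP, hn, mul_comm 3 (5 ^ n)]
        at hmi
      exact Nat.eq_of_mul_eq_mul_left (pow_pos (by norm_num) n) hmi
    have hsyl1 : Nat.card (Sylow 5 G) = 1 := by
      have hmod := card_sylow_modEq_one 5 G
      have hdvd' : Nat.card (Sylow 5 G) ∣ 3 := hindex ▸ P.card_dvd_index
      rcases (Nat.prime_three).eq_one_or_self_of_dvd _ hdvd' with h | h
      · exact h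
      · rw [h] at hmod
        exact absurd hmod (by decide)
    haveI : Subsingleton (Sylow 5 G) := by
      rw [Nat.card_eq_one_iff_unique] at hsyl1
      exact hsyl1.1
    have hPnormal : (P : Subgroup G).Normal := by
      rw [← Subgroup.normalizer_eq_top_iff, Subgroup.eq_top_iff']
      intro g
      exact Sylow.smul_eq_iff_mem_normalizer.mp (Subsingleton.elim _ _)
    haveI := hPnormal
    have hquot3 : Nat.card (G ⧸ (P : Subgroup G)) = 3 := by
      rw [← Subgroup.index_eq_card, hindex]
    haveI : IsCyclic (G ⧸ (P : Subgroup G)) := isCyclic_of_prime_card hquot3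
    obtain ⟨q, hq'⟩ := IsCyclic.exists_generator (α := G ⧸ (P : Subgroup G))
    have hcomm_le : commutator G ≤ (P : Subgroup G) :=
      commutator_le_of_quotient_cyclic hq'
    have : IsPGroup 5 (commutator G) := P.isPGroup'.to_le hcomm_le
    exact this.isNilpotent
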